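/- Let F be an additive functor from add K to abelian groups, where K is an object of an additive category. Then the map F(K') → Hom_{Γ(K)}(Hom(K', K), F(K)) sending a ∈ F(K') to the Γ(K)-module morphism f ↦ F(f)(a) is an isomorphism for every K' ∈ add K. -/

import Mathlib

set_option linter.unusedSectionVars false

open CategoryTheory Limits

universe w v u

variable {A : Type u} [Category.{v} A] [Preadditive A] [HasFiniteBiproducts A]

/-- `M` belongs to `add K`: it is a direct summand of a finite direct sum of copies of `K`. -/
def InAdd (K M : A) : Prop :=
  ∃ (n : ℕ) (s : M ⟶ ⨁ (fun _ : Fin n => K)) (r : (⨁ fun _ : Fin n => K) ⟶ M),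
    s ≫ r = 𝟙 M

lemma InAdd.self (K : A) : InAdd K K := by
  refine ⟨1, biproduct.ι (fun _ : Fin 1 => K) (0 : Fin 1), biproduct.π (fun _ : Fin 1 => K) 0, ?_⟩
  simp

/-- The full subcategory `add K`. -/
abbrev AddCat (K : A) := ObjectProperty.FullSubcategory (InAdd K)

/-- `K` as an object of `add K`. -/
def KO (K : A) : AddCat K := ⟨K, InAdd.self K⟩

variable (K : A) (F : AddCat K ⥤ AddCommGrpCat.{w}) [F.Additive]

noncomputable instance : SMul (End (KO K)) (F.obj (KO K)) :=
  ⟨fun a x => F.map a x⟩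

lemma FSmul_def (a : End (KO K)) (x : F.obj (KO K)) : a • x = F.map a x := rfl

/-- `F(K)` as a left module over `Γ(K) = End K`. -/
noncomputable instance : Module (End (KO K)) (F.obj (KO K)) where
  one_smul x := by rw [FSmul_def]; show (F.map (𝟙 (KO K))) x = x; simp
  mul_smul a b x := by
    rw [FSmul_def, FSmul_def, FSmul_def]
    show (F.map (b ≫ a)) x = _
    rw [F.map_comp]
    rfl
  smul_add a x y := by rw [FSmul_def, FSmul_def, FSmul_def]; exact map_add _ x y
  smul_zero a := by rw [FSmul_def]; exact map_zero _
  add_smul a b x := by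
    rw [FSmul_def, FSmul_def, FSmul_def, F.map_add]
    rfl
  zero_smul x := by
    rw [FSmul_def, F.map_zero]
    rfl

/-- The map `F(K') → Hom_{Γ(K)}(Hom(K', K), F(K))` sending `a` to the
`Γ(K)`-module morphism `f ↦ F(f)(a)`. -/
noncomputable def evalHom (K' : AddCat K) (a : F.obj K') :
    (K' ⟶ KO K) →ₗ[End (KO K)] F.obj (KO K) where
  toFun f := F.map f a
  map_add' f g := by
    dsimp only
    rw [F.map_add]
    rfl
  map_smul' r f := by
    dsimp only
    show F.map (f ≫ r) a = r • (F.map f a)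
    rw [F.map_comp, FSmul_def]
    rfl

lemma sum_hom_apply {X Y : AddCommGrpCat.{w}} {ι : Type} (t : Finset ι) (g : ι → (X ⟶ Y))
    (x : X) : (∑ i ∈ t, g i) x = ∑ i ∈ t, g i x :=
  by classical induction t using Finset.induction_on <;> simp_all

/-- Coerce a morphism in `A` into a morphism in `add K`. -/
def toHomK (K' : AddCat K) (g : K'.obj ⟶ K) : K' ⟶ KO K := ObjectProperty.homMk g

/-- Coerce a morphism in `A` into a morphism in `add K`. -/
def ofHomK (K' : AddCat K) (g : K ⟶ K'.obj) : KO K ⟶ K' := ObjectProperty.homMk g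

/-- for an additive functor `F` from `add K` to abelian groups and any
`K' ∈ add K`, the map `F(K') → Hom_{Γ(K)}(Hom(K', K), F(K))`, `a ↦ (f ↦ F(f)(a))`,
is an isomorphism (of abelian groups). -/
theorem stmt5 (K' : AddCat K) :
    Function.Bijective (evalHom K F K') ∧
    (∀ a b : F.obj K', evalHom K F K' (a + b) = evalHom K F K' a + evalHom K F K' b) := by
  obtain ⟨n, s, r, hsr⟩ := K'.2
  set p : Fin n → (K' ⟶ KO K) := fun i => toHomK K K' (s ≫ biproduct.π (fun _ : Fin n => K) i)
    with hp
  set q : Fin n → (KO K ⟶ K') := fun i => ofHomK K K' (biproduct.ι (fun _ : Fin n => K) i ≫ r)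
    with hq
  have htot : (∑ i : Fin n, p i ≫ q i) = 𝟙 K' := by
    apply (ObjectProperty.ι (InAdd K)).map_injective
    rw [Functor.map_sum]
    show (∑ i : Fin n, (s ≫ biproduct.π (fun _ : Fin n => K) i) ≫
      (biproduct.ι (fun _ : Fin n => K) i ≫ r)) = (𝟙 K'.obj : K'.obj ⟶ K'.obj)
    calc (∑ i : Fin n, (s ≫ biproduct.π (fun _ : Fin n => K) i) ≫
          (biproduct.ι (fun _ : Fin n => K) i ≫ r))
        = s ≫ (∑ i : Fin n, biproduct.π (fun _ : Fin n => K) i ≫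
            biproduct.ι (fun _ : Fin n => K) i) ≫ r := by
          rw [Preadditive.sum_comp, Preadditive.comp_sum]
          congr 1; ext i; simp
      _ = s ≫ 𝟙 _ ≫ r := by rw [biproduct.total]
      _ = 𝟙 K'.obj := by rw [Category.id_comp, hsr]
  have key : ∀ x : F.obj K', x = ∑ i : Fin n, (F.map (q i)) ((F.map (p i)) x) := by
    intro x
    have h1 := congrArg (fun g => (F.map g) x) htot.symm
    simpa [F.map_sum, F.map_comp, sum_hom_apply] using h1
  refine ⟨⟨?_, ?_⟩, ?_⟩
  · intro a b hab
    rw [key a, key b]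
    congr 1; ext i; congr 1
    exact congrArg (fun φ => φ.toFun (p i)) hab
  · intro φ
    refine ⟨∑ i : Fin n, (F.map (q i)) (φ (p i)), ?_⟩
    ext f
    show (F.map f) _ = φ f
    rw [map_sum]
    have step : ∀ i : Fin n,
        (F.map f) ((F.map (q i)) (φ (p i))) = φ (p i ≫ (q i ≫ f)) := by
      intro i
      have hmod : φ (p i ≫ (q i ≫ f)) = (show End (KO K) from q i ≫ f) • φ (p i) :=
        φ.map_smul _ (p i)
      rw [hmod, FSmul_def, F.map_comp]
      rfl
    rw [Finset.sum_congr rfl (fun i _ => step i), ← map_sum]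
    congr 1
    calc (∑ i : Fin n, p i ≫ (q i ≫ f)) = (∑ i : Fin n, p i ≫ q i) ≫ f := by
          rw [Preadditive.sum_comp]; congr 1; ext i; rw [Category.assoc]
      _ = f := by rw [htot, Category.id_comp]
  · intro a b
    ext f
    show (F.map f) (a + b) = (F.map f) a + (F.map f) b
    exact map_add _ a b
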